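/- arXiv:1706.03429 — 3 statements merged into one kernel-verified Lean document; each statement's English description precedes it below -/
import Mathlib

section
/- Let n and s be positive integers with n < s². Then the maximum of a+b over all integers a, b with 0 ≤ a, b ≤ s and s(a+b) − ab ≤ n equals 2s − ⌈2√(s² − n)⌉. -/
theorem stmt_0 (n s : ℕ) (hn : 0 < n) (hs : 0 < s) (h : n < s ^ 2) :
    IsGreatest {x : ℤ | ∃ a b : ℤ, 0 ≤ a ∧ a ≤ (s : ℤ) ∧ 0 ≤ b ∧ b ≤ (s : ℤ) ∧
        (s : ℤ) * (a + b) - a * b ≤ (n : ℤ) ∧ x = a + b}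
      (2 * (s : ℤ) - ⌈2 * Real.sqrt ((s : ℝ) ^ 2 - (n : ℝ))⌉) := by
  set M : ℤ := (s : ℤ) ^ 2 - (n : ℤ) with hM
  have hn' : (1:ℤ) ≤ (n:ℤ) := by exact_mod_cast hn
  have hs' : (1:ℤ) ≤ (s:ℤ) := by exact_mod_cast hs
  have hns : (n:ℤ) < (s:ℤ) ^ 2 := by exact_mod_cast h
  have hMpos : 1 ≤ M := by omega
  have hMs : M ≤ (s:ℤ)^2 := by omega
  have hcast : ((s : ℝ) ^ 2 - (n : ℝ)) = (M : ℝ) := by push_cast [hM]; ring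
  rw [hcast]
  set k : ℤ := ⌈2 * Real.sqrt (M : ℝ)⌉ with hk
  have hMR : (1:ℝ) ≤ (M:ℝ) := by exact_mod_cast hMpos
  have hsqnn : 0 ≤ Real.sqrt (M:ℝ) := Real.sqrt_nonneg _
  have hsqsq : Real.sqrt (M:ℝ) ^ 2 = (M:ℝ) := Real.sq_sqrt (by linarith)
  have hks : k ≤ 2 * s := by
    rw [hk]
    apply Int.ceil_le.mpr
    have hle : Real.sqrt (M:ℝ) ≤ (s:ℝ) := by
      rw [show (s:ℝ) = Real.sqrt ((s:ℝ)^2) by rw [Real.sqrt_sq (by positivity)]]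
      exact Real.sqrt_le_sqrt (by exact_mod_cast hMs)
    push_cast
    linarith
  have hk2 : 2 ≤ k := by
    have h1 : 2 * Real.sqrt (M:ℝ) ≤ (k:ℝ) := Int.le_ceil _
    have h2 : (1:ℝ) ≤ Real.sqrt (M:ℝ) := by nlinarith
    have : (2:ℝ) ≤ (k:ℝ) := by linarith
    exact_mod_cast this
  have h4m : 4 * M ≤ k ^ 2 := by
    have h1 : 2 * Real.sqrt (M:ℝ) ≤ (k:ℝ) := Int.le_ceil _
    have h2 : (2 * Real.sqrt (M:ℝ))^2 ≤ (k:ℝ)^2 := by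
      apply pow_le_pow_left₀ (by positivity) h1
    have h3 : (4:ℝ) * M ≤ (k:ℝ)^2 := by nlinarith
    exact_mod_cast h3
  constructor
  · -- membership
    rcases Int.even_or_odd k with ⟨t, ht⟩ | ⟨t, ht⟩
    · -- k = t + t
      have hMt : M ≤ t ^ 2 := by nlinarith
      refine ⟨(s:ℤ) - t, (s:ℤ) - t, by omega, by omega, by omega, by omega, ?_, by omega⟩
      nlinarith
    · -- k = 2t + 1
      have h5 : 4 * M ≤ 4 * (t * (t + 1)) + 1 := by nlinarith
      have h6 : M ≤ t * (t + 1) := by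
        set q := t * (t + 1) with hq
        omega
      refine ⟨(s:ℤ) - t - 1, (s:ℤ) - t, by omega, by omega, by omega, by omega, ?_, by omega⟩
      nlinarith
  · -- upper bound
    rintro x ⟨a, b, ha0, has, hb0, hbs, hcon, hx⟩
    have huv : M ≤ ((s:ℤ) - a) * ((s:ℤ) - b) := by nlinarith
    have key : k ≤ ((s:ℤ) - a) + ((s:ℤ) - b) := by
      rw [hk]
      apply Int.ceil_le.mpr
      have hU0 : (0:ℝ) ≤ (s:ℝ) - (a:ℝ) := sub_nonneg.mpr (by exact_mod_cast has)
      have hV0 : (0:ℝ) ≤ (s:ℝ) - (b:ℝ) := sub_nonneg.mpr (by exact_mod_cast hbs)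
      have huvR : (M:ℝ) ≤ ((s:ℝ) - (a:ℝ)) * ((s:ℝ) - (b:ℝ)) := by exact_mod_cast huv
      have hw : Real.sqrt (M:ℝ) ≤ Real.sqrt (((s:ℝ) - (a:ℝ)) * ((s:ℝ) - (b:ℝ))) :=
        Real.sqrt_le_sqrt huvR
      have hAM : 2 * Real.sqrt (((s:ℝ) - (a:ℝ)) * ((s:ℝ) - (b:ℝ))) ≤
          ((s:ℝ) - (a:ℝ)) + ((s:ℝ) - (b:ℝ)) := by
        nlinarith [Real.sq_sqrt (mul_nonneg hU0 hV0), Real.sqrt_nonneg (((s:ℝ) - (a:ℝ)) * ((s:ℝ) - (b:ℝ))),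
          sq_nonneg (((s:ℝ) - (a:ℝ)) - ((s:ℝ) - (b:ℝ))),
          sq_nonneg (((s:ℝ) - (a:ℝ)) + ((s:ℝ) - (b:ℝ)) - 2 * Real.sqrt (((s:ℝ) - (a:ℝ)) * ((s:ℝ) - (b:ℝ))))]
      push_cast
      linarith
    omega
end

section
/- Let n and s be positive integers with n < s². Then the maximum of a+b over all real numbers a, b with 0 ≤ a, b ≤ s and s(a+b) − ab ≤ n equals 2(s − √(s² − n)). -/
theorem stmt_1 (n s : ℕ) (hn : 0 < n) (hs : 0 < s) (h : n < s ^ 2) :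
    IsGreatest {x : ℝ | ∃ a b : ℝ, 0 ≤ a ∧ a ≤ (s : ℝ) ∧ 0 ≤ b ∧ b ≤ (s : ℝ) ∧
        (s : ℝ) * (a + b) - a * b ≤ (n : ℝ) ∧ x = a + b}
      (2 * ((s : ℝ) - Real.sqrt ((s : ℝ) ^ 2 - (n : ℝ)))) := by
  have hn' : (n : ℝ) < (s : ℝ) ^ 2 := by exact_mod_cast h
  have hn0 : (0:ℝ) < n := by exact_mod_cast hn
  have hs0 : (0:ℝ) < s := by exact_mod_cast hs
  set r := Real.sqrt ((s : ℝ) ^ 2 - (n : ℝ)) with hr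
  have hr0 : 0 ≤ r := Real.sqrt_nonneg _
  have hrsq : r ^ 2 = (s : ℝ) ^ 2 - n := Real.sq_sqrt (by linarith)
  have hrs : r ≤ s := by nlinarith
  constructor
  · exact ⟨s - r, s - r, by linarith, by linarith, by linarith, by linarith,
      by nlinarith, by ring⟩
  · rintro x ⟨a, b, ha0, has, hb0, hbs, hab, rfl⟩
    nlinarith [sq_nonneg (a - b), sq_nonneg (2 * s - (a + b) - 2 * r),
      mul_nonneg (add_nonneg (sub_nonneg.mpr has) (sub_nonneg.mpr hbs)) hr0]
end

section
/- Let n, s be positive integers with n < s² and let α = s − √(s² − n). If α − ⌊α⌋ ≥ 1/2, then with a = ⌊α⌋ and b = ⌊α⌋ + 1 one has ab − s(a+b) + n ≥ 0. -/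
theorem stmt_4 (n s : ℕ) (hn : 0 < n) (hs : 0 < s) (h : n < s ^ 2) :
    let α : ℝ := (s : ℝ) - Real.sqrt ((s : ℝ) ^ 2 - (n : ℝ))
    α - ⌊α⌋ ≥ 1 / 2 →
      let a : ℤ := ⌊α⌋
      let b : ℤ := ⌊α⌋ + 1
      a * b - (s : ℤ) * (a + b) + (n : ℤ) ≥ 0 := by
  intro α ht a b
  set r : ℝ := Real.sqrt ((s : ℝ) ^ 2 - (n : ℝ)) with hr
  have hps : (n : ℝ) + 1 ≤ (s : ℝ) ^ 2 := by exact_mod_cast h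
  have hr1 : 1 ≤ r := by
    rw [hr]
    rw [show (1:ℝ) = Real.sqrt 1 by simp]
    exact Real.sqrt_le_sqrt (by linarith)
  have hr2 : r ^ 2 = (s : ℝ) ^ 2 - (n : ℝ) := Real.sq_sqrt (by linarith)
  have hf1 : (⌊α⌋ : ℝ) ≤ α := Int.floor_le α
  have hf2 : α < ⌊α⌋ + 1 := Int.lt_floor_add_one α
  have hα : α = (s : ℝ) - r := rfl
  -- the expression as a real number is ≥ -1/4
  have key : ((a * b - (s : ℤ) * (a + b) + (n : ℤ) : ℤ) : ℝ) ≥ -(1/4) := by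
    have ha : (a : ℝ) = (⌊α⌋ : ℝ) := by simp [a]
    have hb : (b : ℝ) = (⌊α⌋ : ℝ) + 1 := by push_cast [b]; ring
    push_cast [ha, hb]
    nlinarith [sq_nonneg (α - ⌊α⌋ - 1/2), mul_nonneg (by linarith : (0:ℝ) ≤ 2*(α - ⌊α⌋) - 1) (by linarith : (0:ℝ) ≤ r - 1), sq_nonneg (α - ⌊α⌋)]
  by_contra hcon
  push_neg at hcon
  have : (a * b - (s : ℤ) * (a + b) + (n : ℤ) : ℤ) ≤ -1 := by omega
  have : ((a * b - (s : ℤ) * (a + b) + (n : ℤ) : ℤ) : ℝ) ≤ -1 := by exact_mod_cast this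
  linarith
end
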